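/- Let n ≥ 1 and let I : (Fin n → ℝ) → ℝ satisfy the normalization axiom I5 on nonnegative vectors: I(x) ≥ 0 for every x with x i ≥ 0 for all i, and I(x) = 0 if and only if x is constant. Define R_I(x) := E(x)·(1 + I(x)). Then R_I satisfies aversity F6 on nonnegative vectors (R_I(x) > E(x) for every nonconstant x with x i ≥ 0 for all i) and F8 on nonnegative constants (R_I(c·1) = c for every c ≥ 0). Conversely, if R : (Fin n → ℝ) → ℝ satisfies F6 on nonnegative vectors and F8 on nonnegative constants, then I_R defined by I_R(x) := R(x)/E(x) − 1 when E(x) ≠ 0 and I_R(x) := 0 when E(x) = 0 satisfies I5 on nonnegative vectors. -/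

import Mathlib

lemma mean_zero_of_nonneg {n : ℕ} (hn : 1 ≤ n) (x : Fin n → ℝ) (hx : ∀ i, 0 ≤ x i)
    (h : (∑ i, x i) / n = 0) : ∀ i, x i = 0 := by
  have hn0 : (n : ℝ) ≠ 0 := Nat.cast_ne_zero.mpr (by omega)
  have hsum : (∑ i, x i) = 0 := by
    field_simp at h; simpa using h
  intro i
  have := (Finset.sum_eq_zero_iff_of_nonneg (fun i _ => hx i)).mp hsum
  exact this i (Finset.mem_univ i)

lemma mean_pos_of_nonconst {n : ℕ} (hn : 1 ≤ n) (x : Fin n → ℝ) (hx : ∀ i, 0 ≤ x i)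
    (hnc : ¬ ∃ c : ℝ, ∀ i, x i = c) : 0 < (∑ i, x i) / n := by
  have hn0 : (0:ℝ) < n := by exact_mod_cast Nat.lt_of_lt_of_le Nat.zero_lt_one hn
  apply div_pos _ hn0
  rcases lt_or_eq_of_le (Finset.sum_nonneg fun i _ => hx i) with h | h
  · exact h
  · exfalso; apply hnc; exact ⟨0, mean_zero_of_nonneg hn x hx (by rw [← h]; simp)⟩

open Classical in
/-- if `I` satisfies normalization (I5) on nonnegative vectors,
then `R_I(x) := E(x)·(1 + I(x))` satisfies aversity (F6) on nonnegative vectors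
and F8 on nonnegative constants; conversely, if `R` satisfies F6 and F8 then
`I_R(x) := R(x)/E(x) − 1` (and `0` when `E(x) = 0`) satisfies I5 on
nonnegative vectors. -/
theorem normalization_aversity_correspondence (n : ℕ) (hn : 1 ≤ n) :
    (∀ I : (Fin n → ℝ) → ℝ,
      ((∀ x : Fin n → ℝ, (∀ i, 0 ≤ x i) → 0 ≤ I x) ∧
       (∀ x : Fin n → ℝ, (∀ i, 0 ≤ x i) → (I x = 0 ↔ ∃ c : ℝ, ∀ i, x i = c))) →
      ((∀ x : Fin n → ℝ, (∀ i, 0 ≤ x i) → (¬ ∃ c : ℝ, ∀ i, x i = c) →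
          (∑ i, x i) / n < ((∑ i, x i) / n) * (1 + I x)) ∧
       (∀ c : ℝ, 0 ≤ c →
          ((∑ _i : Fin n, c) / n) * (1 + I (fun _ => c)) = c))) ∧
    (∀ R : (Fin n → ℝ) → ℝ,
      ((∀ x : Fin n → ℝ, (∀ i, 0 ≤ x i) → (¬ ∃ c : ℝ, ∀ i, x i = c) →
          (∑ i, x i) / n < R x) ∧
       (∀ c : ℝ, 0 ≤ c → R (fun _ => c) = c)) →
      ((∀ x : Fin n → ℝ, (∀ i, 0 ≤ x i) →
          0 ≤ (if (∑ i, x i) / n = 0 then (0 : ℝ)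
                else R x / ((∑ i, x i) / n) - 1)) ∧
       (∀ x : Fin n → ℝ, (∀ i, 0 ≤ x i) →
          ((if (∑ i, x i) / n = 0 then (0 : ℝ)
              else R x / ((∑ i, x i) / n) - 1) = 0 ↔ ∃ c : ℝ, ∀ i, x i = c)))) := by
  have hn0 : (n : ℝ) ≠ 0 := Nat.cast_ne_zero.mpr (by omega)
  constructor
  · rintro I ⟨hI1, hI2⟩
    constructor
    · intro x hx hnc
      have hE := mean_pos_of_nonconst hn x hx hnc
      have hIpos : 0 < I x := lt_of_le_of_ne (hI1 x hx) fun h => hnc ((hI2 x hx).mp h.symm)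
      nlinarith
    · intro c hc
      have : I (fun _ => c) = 0 := (hI2 _ (fun _ => hc)).mpr ⟨c, fun _ => rfl⟩
      rw [this]
      simp [Finset.sum_const]
      field_simp
  · rintro R ⟨hF6, hF8⟩
    have key : ∀ x : Fin n → ℝ, (∀ i, 0 ≤ x i) → ¬ (∑ i, x i) / n = 0 →
        (¬ ∃ c : ℝ, ∀ i, x i = c) → 0 < R x / ((∑ i, x i) / n) - 1 := by
      intro x hx hE hnc
      have hEpos := mean_pos_of_nonconst hn x hx hnc
      have := hF6 x hx hnc
      have : 1 < R x / ((∑ i, x i) / n) := (one_lt_div hEpos).mpr this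
      linarith
    have keyc : ∀ x : Fin n → ℝ, (∀ i, 0 ≤ x i) → ¬ (∑ i, x i) / n = 0 →
        (∃ c : ℝ, ∀ i, x i = c) → R x / ((∑ i, x i) / n) - 1 = 0 := by
      rintro x hx hE ⟨c, hc⟩
      have hxc : x = fun _ => c := funext hc
      have hsum : (∑ i, x i) = n * c := by simp [hxc, Finset.sum_const, mul_comm]
      have hEc : (∑ i, x i) / n = c := by rw [hsum]; field_simp
      have hcpos : 0 < c := by
        have h1 : 0 ≤ c := hc ⟨0, by omega⟩ ▸ hx ⟨0, by omega⟩
        have h2 : c ≠ 0 := fun hc0 => hE (by rw [hEc, hc0])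
        exact lt_of_le_of_ne h1 (Ne.symm h2)
      rw [hEc, hxc, hF8 c hcpos.le]
      field_simp
      norm_num
    constructor
    · intro x hx
      split_ifs with h
      · exact le_refl 0
      · by_cases hnc : ∃ c : ℝ, ∀ i, x i = c
        · rw [keyc x hx h hnc]
        · exact (key x hx h hnc).le
    · intro x hx
      split_ifs with h
      · simp only [true_iff]
        exact ⟨0, mean_zero_of_nonneg hn x hx h⟩
      · constructor
        · intro h0
          by_contra hnc
          exact absurd h0 (ne_of_gt (key x hx h hnc))
        · exact keyc x hx h
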